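/- Let X be Laplace(0, b) with b > 0 and Y ~ N(0, σ²) independent with σ² ≥ 0. If X + Y is Laplace(0, b') for some b' > 0, then σ² = 0 and b' = b. -/

import Mathlib

open MeasureTheory ProbabilityTheory Real
open scoped NNReal

/-- The Laplace distribution with location 0 and scale `b`, given by the density
`x ↦ exp (-|x| / b) / (2 * b)` with respect to Lebesgue measure. -/
noncomputable def laplaceMeasure (b : ℝ) : Measure ℝ :=
  volume.withDensity fun x => ENNReal.ofReal (Real.exp (-|x| / b) / (2 * b))

section Auxiliary
open Set
open scoped ENNReal

lemma aux_integral_exp_neg_mul_Ioi {r : ℝ} (hr : 0 < r) :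
    ∫ x in Ioi (0:ℝ), exp (-(r * x)) = 1 / r := by
  have h := Real.integral_rpow_mul_exp_neg_mul_Ioi (a := 1) zero_lt_one hr
  simpa [Real.rpow_natCast, Real.Gamma_one] using h

lemma laplace_exp_integral {b : ℝ} (hb : 0 < b) {t : ℝ} (ht : |t| < 1 / b) :
    ∫ x, Real.exp (t * x) ∂(laplaceMeasure b) = 1 / (1 - b ^ 2 * t ^ 2) := by
  have hb0 : b ≠ 0 := hb.ne'
  have habs := abs_lt.mp ht
  have h1 : 0 < 1 / b - t := by linarith [habs.2]
  have h2 : 0 < 1 / b + t := by linarith [habs.1]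
  set φ : ℝ → ℝ := fun x => Real.exp (-|x| / b) / (2 * b) * Real.exp (t * x) with hφ
  have hcont : Continuous fun x : ℝ => Real.exp (-|x| / b) / (2 * b) := by fun_prop
  have hmeas : Measurable fun x : ℝ => Real.toNNReal (Real.exp (-|x| / b) / (2 * b)) :=
    hcont.measurable.real_toNNReal
  have hrw : ∫ x, Real.exp (t * x) ∂(laplaceMeasure b) = ∫ x, φ x := by
    rw [laplaceMeasure]
    rw [show (fun x : ℝ => ENNReal.ofReal (Real.exp (-|x| / b) / (2 * b)))
        = (fun x : ℝ => ((Real.toNNReal (Real.exp (-|x| / b) / (2 * b)) : ℝ≥0) : ℝ≥0∞)) from rfl]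
    rw [integral_withDensity_eq_integral_smul hmeas]
    refine integral_congr_ae (Filter.Eventually.of_forall fun x => ?_)
    show (Real.toNNReal (Real.exp (-|x| / b) / (2 * b))) • Real.exp (t * x) = φ x
    rw [NNReal.smul_def, Real.coe_toNNReal _ (by positivity), smul_eq_mul, hφ]
  -- integrands on the two half lines
  have hIoi_eq : ∀ x ∈ Ioi (0:ℝ), φ x = Real.exp (-((1 / b - t) * x)) / (2 * b) := by
    intro x hx
    rw [hφ]
    simp only [abs_of_pos (mem_Ioi.mp hx)]
    rw [div_mul_eq_mul_div, ← Real.exp_add]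
    congr 1
    field_simp
    ring
  have hIic_eq : ∀ x ∈ Iic (0:ℝ), φ x = Real.exp (-((1 / b + t) * (-x))) / (2 * b) := by
    intro x hx
    rw [hφ]
    simp only [abs_of_nonpos (mem_Iic.mp hx)]
    rw [div_mul_eq_mul_div, ← Real.exp_add]
    congr 1
    field_simp
  have hint1 : IntegrableOn φ (Ioi (0:ℝ)) := by
    refine (IntegrableOn.congr_fun ?_ (fun x hx => (hIoi_eq x hx).symm) measurableSet_Ioi)
    exact (exp_neg_integrableOn_Ioi 0 h1).congr_fun
      (fun x _ => by rw [neg_mul]) measurableSet_Ioi |>.div_const _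
  have hint2 : IntegrableOn φ (Iic (0:ℝ)) := by
    have hnegint : IntegrableOn (fun x : ℝ => Real.exp (-((1 / b + t) * x)) / (2 * b))
        (Ioi (0:ℝ)) :=
      (exp_neg_integrableOn_Ioi 0 h2).congr_fun
        (fun x _ => by rw [neg_mul]) measurableSet_Ioi |>.div_const _
    have A : MeasurableEmbedding fun x : ℝ => -x :=
      (Homeomorph.neg ℝ).isClosedEmbedding.measurableEmbedding
    have := ((Measure.measurePreserving_neg (volume : Measure ℝ)).integrableOn_comp_preimage A).mpr
        hnegint
    simp only [Function.comp_def, neg_preimage, neg_Ioi, neg_zero] at this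
    refine (this.congr_set_ae Iio_ae_eq_Iic.symm).congr_fun (fun x hx => (hIic_eq x hx).symm)
      measurableSet_Iic
  have hsplit : (∫ x in Iic (0:ℝ), φ x) + (∫ x in Ioi (0:ℝ), φ x) = ∫ x, φ x :=
    intervalIntegral.integral_Iic_add_Ioi hint2 hint1
  have hI1 : ∫ x in Ioi (0:ℝ), φ x = (1 / (1 / b - t)) / (2 * b) := by
    rw [setIntegral_congr_fun measurableSet_Ioi hIoi_eq, integral_div,
      aux_integral_exp_neg_mul_Ioi h1]
  have hI2 : ∫ x in Iic (0:ℝ), φ x = (1 / (1 / b + t)) / (2 * b) := by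
    rw [setIntegral_congr_fun measurableSet_Iic hIic_eq]
    have := integral_comp_neg_Iic (0:ℝ) (fun y => Real.exp (-((1 / b + t) * y)) / (2 * b))
    rw [this, neg_zero, integral_div, aux_integral_exp_neg_mul_Ioi h2]
  have hne1 : (1 / b - t) ≠ 0 := h1.ne'
  have hne2 : (1 / b + t) ≠ 0 := h2.ne'
  have hne3 : 1 - b ^ 2 * t ^ 2 ≠ 0 := by
    have h3 : b * |t| < 1 := by
      have := (lt_div_iff₀ hb).mp ht
      linarith [this]
    have h4 : (0:ℝ) ≤ b * |t| := by positivity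
    have h5 : (b * |t|) ^ 2 < 1 := by nlinarith
    have h6 : b ^ 2 * t ^ 2 = (b * |t|) ^ 2 := by rw [mul_pow, sq_abs]
    linarith
  have hbt1 : (0:ℝ) < 1 - b * t := by
    have := mul_pos hb h1
    rw [mul_sub, mul_one_div, div_self hb0] at this
    linarith
  have hbt2 : (0:ℝ) < 1 + b * t := by
    have := mul_pos hb h2
    rw [mul_add, mul_one_div, div_self hb0] at this
    linarith
  have r1 : 1 / (1 / b - t) = b / (1 - b * t) := by
    rw [div_eq_div_iff hne1 hbt1.ne']
    field_simp
  have r2 : 1 / (1 / b + t) = b / (1 + b * t) := by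
    rw [div_eq_div_iff hne2 hbt2.ne']
    field_simp
  rw [hrw, ← hsplit, hI1, hI2, r1, r2, div_div, div_div,
    div_add_div _ _ (by positivity) (by positivity),
    div_eq_div_iff (by positivity) hne3]
  ring

lemma aux_le_zero {A B ε : ℝ} (hε : 0 < ε) (h : ∀ s, 0 < s → s < ε → A ≤ B * s) : A ≤ 0 := by
  have ht : Filter.Tendsto (fun s : ℝ => B * s) (nhdsWithin 0 (Ioi 0)) (nhds 0) := by
    have : Filter.Tendsto (fun s : ℝ => B * s) (nhds 0) (nhds (B * 0)) :=
      (continuous_const.mul continuous_id).tendsto 0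
    simpa using this.mono_left nhdsWithin_le_nhds
  refine ge_of_tendsto ht ?_
  filter_upwards [Ioo_mem_nhdsGT_of_mem ⟨le_refl (0:ℝ), hε⟩] with s hs
  exact h s hs.1 hs.2

lemma final_algebra {c c' w δ : ℝ} (hc : 0 < c) (hc' : 0 < c') (hw : 0 ≤ w) (hδ : 0 < δ)
    (h : ∀ t : ℝ, 0 < t → t < δ →
      Real.exp (w * t ^ 2 / 2) * (1 - c' * t ^ 2) = 1 - c * t ^ 2) :
    w = 0 ∧ c' = c := by
  set ε := min (δ ^ 2) (min (1 / (w + 1)) (min (1 / (2 * c)) (1 / (2 * c')))) with hεdef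
  have hε0 : 0 < ε := by
    refine lt_min (by positivity) (lt_min (by positivity) (lt_min (by positivity) (by positivity)))
  have hs : ∀ s, 0 < s → s < ε → Real.exp (w * s / 2) * (1 - c' * s) = 1 - c * s := by
    intro s hs1 hs2
    have hsδ : Real.sqrt s < δ := by
      have h1 : s < δ ^ 2 := hs2.trans_le (min_le_left _ _)
      have := Real.sqrt_lt_sqrt hs1.le h1
      rwa [Real.sqrt_sq hδ.le] at this
    have := h (Real.sqrt s) (Real.sqrt_pos.mpr hs1) hsδ
    rwa [Real.sq_sqrt hs1.le] at this
  -- basic bounds on the range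
  have hbnd : ∀ s, 0 < s → s < ε → w * s < 1 ∧ c * s < 1 / 2 ∧ c' * s < 1 / 2 := by
    intro s hs1 hs2
    have h1 : s < 1 / (w + 1) := hs2.trans_le ((min_le_right _ _).trans (min_le_left _ _))
    have h2 : s < 1 / (2 * c) :=
      hs2.trans_le ((min_le_right _ _).trans ((min_le_right _ _).trans (min_le_left _ _)))
    have h3 : s < 1 / (2 * c') :=
      hs2.trans_le ((min_le_right _ _).trans ((min_le_right _ _).trans (min_le_right _ _)))
    have hw1 : (0:ℝ) < w + 1 := by linarith
    have e1 : s * (w + 1) < 1 := by rwa [← lt_div_iff₀ hw1]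
    have e2 : s * (2 * c) < 1 := by rwa [← lt_div_iff₀ (by positivity)]
    have e3 : s * (2 * c') < 1 := by rwa [← lt_div_iff₀ (by positivity)]
    refine ⟨by nlinarith, by nlinarith, by nlinarith⟩
  -- step 1a : c + w/2 - c' ≤ 0
  have k1 : c + w / 2 - c' ≤ 0 := by
    refine aux_le_zero (B := w * c' / 2) hε0 fun s hs1 hs2 => ?_
    obtain ⟨hb1, hb2, hb3⟩ := hbnd s hs1 hs2
    have heq := hs s hs1 hs2
    have h1c' : (0:ℝ) ≤ 1 - c' * s := by linarith
    have he1 : 1 + w * s / 2 ≤ Real.exp (w * s / 2) := by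
      have := Real.add_one_le_exp (w * s / 2); linarith
    have hmul := mul_le_mul_of_nonneg_right he1 h1c'
    rw [heq] at hmul
    have : (c + w / 2 - c') * s ≤ (w * c' / 2 * s) * s := by nlinarith
    exact (mul_le_mul_iff_of_pos_right hs1).mp this
  -- step 1b : c' - c - w/2 ≤ 0
  have k2 : c' - c - w / 2 ≤ 0 := by
    refine aux_le_zero (B := 0) hε0 fun s hs1 hs2 => ?_
    obtain ⟨hb1, hb2, hb3⟩ := hbnd s hs1 hs2
    have heq := hs s hs1 hs2
    have h1c' : (0:ℝ) ≤ 1 - c' * s := by linarith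
    have he2 : 1 - w * s / 2 ≤ Real.exp (-(w * s / 2)) := by
      have := Real.add_one_le_exp (-(w * s / 2)); linarith
    have hE : (1 - w * s / 2) * Real.exp (w * s / 2) ≤ 1 := by
      have := mul_le_mul_of_nonneg_right he2 (Real.exp_pos (w * s / 2)).le
      rwa [← Real.exp_add, neg_add_cancel, Real.exp_zero] at this
    have hmul := mul_le_mul_of_nonneg_right hE h1c'
    have heq2 : (1 - w * s / 2) * Real.exp (w * s / 2) * (1 - c' * s)
        = (1 - w * s / 2) * (1 - c * s) := by rw [mul_assoc, heq]
    rw [heq2, one_mul] at hmul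
    have : (c' - c - w / 2) * s ≤ (0 * s) * s := by nlinarith [mul_nonneg (mul_nonneg hc.le hw) (mul_pos hs1 hs1).le]
    exact (mul_le_mul_iff_of_pos_right hs1).mp this
  have hcw : c' = c + w / 2 := by linarith
  -- step 2 : w = 0
  have k3 : w ^ 2 / 16 + c * w / 2 ≤ 0 := by
    refine aux_le_zero (B := c * w ^ 2 / 16) hε0 fun s hs1 hs2 => ?_
    obtain ⟨hb1, hb2, hb3⟩ := hbnd s hs1 hs2
    have heq := hs s hs1 hs2
    have h1c' : (0:ℝ) ≤ 1 - c' * s := by linarith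
    have he3 : 1 - w * s / 4 ≤ Real.exp (-(w * s / 4)) := by
      have := Real.add_one_le_exp (-(w * s / 4)); linarith
    have h14 : (0:ℝ) ≤ 1 - w * s / 4 := by nlinarith
    have hsq : (1 - w * s / 4) ^ 2 ≤ Real.exp (-(w * s / 2)) := by
      have := mul_le_mul he3 he3 h14 (Real.exp_pos _).le
      rwa [← Real.exp_add, show -(w * s / 4) + -(w * s / 4) = -(w * s / 2) by ring, ← sq] at this
    have hE : (1 - w * s / 4) ^ 2 * Real.exp (w * s / 2) ≤ 1 := by
      have := mul_le_mul_of_nonneg_right hsq (Real.exp_pos (w * s / 2)).le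
      rwa [← Real.exp_add, neg_add_cancel, Real.exp_zero] at this
    have hmul := mul_le_mul_of_nonneg_right hE h1c'
    have heq2 : (1 - w * s / 4) ^ 2 * Real.exp (w * s / 2) * (1 - c' * s)
        = (1 - w * s / 4) ^ 2 * (1 - c * s) := by rw [mul_assoc, heq]
    rw [heq2, one_mul, hcw] at hmul
    -- hmul : (1 - w*s/4)^2 * (1 - c*s) ≤ 1 - (c + w/2)*s
    have : (w ^ 2 / 16 + c * w / 2) * s ^ 2 ≤ (c * w ^ 2 / 16 * s) * s ^ 2 := by
      nlinarith [hmul]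
    exact (mul_le_mul_iff_of_pos_right (by positivity : (0:ℝ) < s ^ 2)).mp this
  have hw0 : w = 0 := by nlinarith
  exact ⟨hw0, by rw [hcw, hw0]; ring⟩

lemma gaussian_exp_integral (v : ℝ≥0) (t : ℝ) :
    ∫ x, Real.exp (t * x) ∂(gaussianReal 0 v) = Real.exp ((v : ℝ) * t ^ 2 / 2) := by
  by_cases hv : v = 0
  · subst hv
    rw [gaussianReal_zero_var, integral_dirac]
    simp
  · have hv' : (0:ℝ) < (v : ℝ) := by
      exact_mod_cast pos_iff_ne_zero.mpr hv
    have hπv : (0:ℝ) < Real.sqrt (2 * π * v) := by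
      apply Real.sqrt_pos.mpr; positivity
    rw [gaussianReal_of_var_ne_zero _ hv]
    rw [show ProbabilityTheory.gaussianPDF 0 v
        = (fun x : ℝ => ((Real.toNNReal (ProbabilityTheory.gaussianPDFReal 0 v x) : ℝ≥0) : ℝ≥0∞))
        from rfl]
    rw [integral_withDensity_eq_integral_smul
      (ProbabilityTheory.measurable_gaussianPDFReal 0 v).real_toNNReal]
    have key : ∀ x : ℝ,
        (Real.toNNReal (ProbabilityTheory.gaussianPDFReal 0 v x)) • Real.exp (t * x)
        = Real.exp ((v : ℝ) * t ^ 2 / 2) *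
          ((Real.sqrt (2 * π * v))⁻¹ * Real.exp (-(1 / (2 * (v:ℝ))) * (x - t * v) ^ 2)) := by
      intro x
      rw [NNReal.smul_def,
        Real.coe_toNNReal _ (ProbabilityTheory.gaussianPDFReal_nonneg 0 v x), smul_eq_mul,
        ProbabilityTheory.gaussianPDFReal]
      rw [mul_assoc, ← Real.exp_add, mul_left_comm, ← Real.exp_add]
      congr 1
      field_simp
      ring
    simp_rw [key]
    rw [MeasureTheory.integral_const_mul, MeasureTheory.integral_const_mul]
    have hsub : ∫ x : ℝ, Real.exp (-(1 / (2 * (v:ℝ))) * (x - t * v) ^ 2)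
        = ∫ x : ℝ, Real.exp (-(1 / (2 * (v:ℝ))) * x ^ 2) :=
      integral_sub_right_eq_self (fun y => Real.exp (-(1 / (2 * (v:ℝ))) * y ^ 2)) (t * v)
    rw [hsub, integral_gaussian]
    have : Real.sqrt (π / (1 / (2 * (v:ℝ)))) = Real.sqrt (2 * π * v) := by
      congr 1
      field_simp
    rw [this, inv_mul_cancel₀ hπv.ne', mul_one]

lemma one_sub_sq_pos {b t : ℝ} (hb : 0 < b) (ht : |t| < 1 / b) : 0 < 1 - b ^ 2 * t ^ 2 := by
  have h3 : b * |t| < 1 := by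
    have := (lt_div_iff₀ hb).mp ht
    linarith
  have h4 : (0:ℝ) ≤ b * |t| := by positivity
  have h5 : (b * |t|) ^ 2 < 1 := by nlinarith
  have h6 : b ^ 2 * t ^ 2 = (b * |t|) ^ 2 := by rw [mul_pow, sq_abs]
  linarith

lemma mgf_eq_integral_map {Ω : Type*} [MeasurableSpace Ω] {μ : Measure Ω} {X : Ω → ℝ}
    (hX : AEMeasurable X μ) (t : ℝ) :
    ProbabilityTheory.mgf X μ t = ∫ x, Real.exp (t * x) ∂(μ.map X) := by
  rw [ProbabilityTheory.mgf, integral_map hX (Continuous.aestronglyMeasurable (by fun_prop))]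


end Auxiliary

/-- Let `X` be `Laplace(0, b)` with `b > 0` and `Y ~ N(0, v)` independent with `v ≥ 0`.
If `X + Y` is `Laplace(0, b')` for some `b' > 0`, then `v = 0` and `b' = b`. -/
theorem stmt_14 {Ω : Type*} [MeasurableSpace Ω] (μ : Measure Ω) [IsProbabilityMeasure μ]
    (X Y : Ω → ℝ) (hMX : Measurable X) (hMY : Measurable Y)
    (hindep : IndepFun X Y μ)
    (b : ℝ) (hb : 0 < b) (v : ℝ≥0)
    (hX : μ.map X = laplaceMeasure b)
    (hY : μ.map Y = gaussianReal 0 v)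
    (b' : ℝ) (hb' : 0 < b')
    (hZ : μ.map (fun ω => X ω + Y ω) = laplaceMeasure b') :
    v = 0 ∧ b' = b := by
  have hδ : 0 < min (1 / b) (1 / b') := lt_min (by positivity) (by positivity)
  have key : ∀ t : ℝ, 0 < t → t < min (1 / b) (1 / b') →
      Real.exp ((v : ℝ) * t ^ 2 / 2) * (1 - b' ^ 2 * t ^ 2) = 1 - b ^ 2 * t ^ 2 := by
    intro t ht1 ht2
    have htb : |t| < 1 / b := by
      rw [abs_of_pos ht1]; exact ht2.trans_le (min_le_left _ _)
    have htb' : |t| < 1 / b' := by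
      rw [abs_of_pos ht1]; exact ht2.trans_le (min_le_right _ _)
    have h4 := one_sub_sq_pos hb htb
    have h5 := one_sub_sq_pos hb' htb'
    have e1 : ProbabilityTheory.mgf X μ t = 1 / (1 - b ^ 2 * t ^ 2) := by
      rw [mgf_eq_integral_map hMX.aemeasurable, hX, laplace_exp_integral hb htb]
    have e2 : ProbabilityTheory.mgf Y μ t = Real.exp ((v : ℝ) * t ^ 2 / 2) := by
      rw [mgf_eq_integral_map hMY.aemeasurable, hY, gaussian_exp_integral]
    have e3 : ProbabilityTheory.mgf (X + Y) μ t = 1 / (1 - b' ^ 2 * t ^ 2) := by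
      have : ProbabilityTheory.mgf (X + Y) μ t
          = ∫ x, Real.exp (t * x) ∂(μ.map (fun ω => X ω + Y ω)) :=
        mgf_eq_integral_map ((hMX.add hMY).aemeasurable) t
      rw [this, hZ, laplace_exp_integral hb' htb']
    have hprod := hindep.mgf_add' (t := t) hMX.aestronglyMeasurable hMY.aestronglyMeasurable
    rw [e1, e2, e3] at hprod
    field_simp at hprod
    rw [eq_div_iff (show (0:ℝ) < 1 - t ^ 2 * b ^ 2 by linarith [h4, mul_comm (t ^ 2) (b ^ 2)]).ne',
      show t ^ 2 * (v:ℝ) / 2 = (v:ℝ) * t ^ 2 / 2 by ring] at hprod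
    linarith [hprod]
  obtain ⟨hw0, hcc⟩ := final_algebra (by positivity) (by positivity) v.coe_nonneg hδ key
  refine ⟨by exact_mod_cast hw0, ?_⟩
  have hfac : (b' - b) * (b' + b) = 0 := by linear_combination hcc
  rcases mul_eq_zero.mp hfac with h | h
  · linarith
  · linarith
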